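/- Let n, m : ℕ, let M be a real m × n matrix, and let μ be the product measure on Fin n → ℝ whose coordinates are i.i.d. standard Gaussians (Measure.pi (fun _ => gaussianReal 0 1)). Then the Hutchinson estimator is unbiased: ∫ ‖M.mulVec v‖² dμ(v) = ∑_{i,j} (M i j)², i.e., the expectation equals the squared Frobenius norm of M, which also equals Matrix.trace (M * Mᵀ). -/

import Mathlib

open MeasureTheory ProbabilityTheory Matrix

section HutchAux
open Real
open scoped NNReal ENNReal
noncomputable section

lemma hutch_pdf_eq (x : ℝ) :
    gaussianPDFReal 0 1 x = (Real.sqrt (2 * π))⁻¹ * rexp (-(1/2) * x ^ 2) := by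
  simp only [gaussianPDFReal, NNReal.coe_one, mul_one, sub_zero]
  congr 1
  ring

lemma hutch_density :
    gaussianReal 0 1
      = MeasureTheory.volume.withDensity
          (fun x => ((Real.toNNReal (gaussianPDFReal 0 1 x) : ℝ≥0) : ℝ≥0∞)) := by
  rw [gaussianReal_of_var_ne_zero 0 one_ne_zero]
  rfl

lemma hutch_meas : Measurable (fun x => Real.toNNReal (gaussianPDFReal 0 1 x)) :=
  (measurable_gaussianPDFReal 0 1).real_toNNReal

lemma hutch_transfer (g : ℝ → ℝ) :
    ∫ x, g x ∂(gaussianReal 0 1) = ∫ x, gaussianPDFReal 0 1 x * g x := by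
  rw [hutch_density, integral_withDensity_eq_integral_smul hutch_meas]
  congr 1
  ext x
  simp [NNReal.smul_def, Real.coe_toNNReal _ (gaussianPDFReal_nonneg 0 1 x)]

lemma hutch_transfer_int (g : ℝ → ℝ) :
    Integrable g (gaussianReal 0 1) ↔
      Integrable (fun x => gaussianPDFReal 0 1 x * g x) := by
  rw [hutch_density, integrable_withDensity_iff_integrable_smul hutch_meas]
  constructor <;> intro h <;>
  · refine h.congr (Filter.Eventually.of_forall fun x => ?_)
    simp [NNReal.smul_def, Real.coe_toNNReal _ (gaussianPDFReal_nonneg 0 1 x)]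

lemma hutch_int1 : Integrable (fun x : ℝ => x) (gaussianReal 0 1) := by
  rw [hutch_transfer_int]
  have h := (integrable_mul_exp_neg_mul_sq (by norm_num : (0:ℝ) < 1/2)).const_mul
    ((Real.sqrt (2 * π))⁻¹)
  refine h.congr (Filter.Eventually.of_forall fun x => ?_)
  simp only [hutch_pdf_eq]
  ring

lemma hutch_int2 : Integrable (fun x : ℝ => x ^ 2) (gaussianReal 0 1) := by
  rw [hutch_transfer_int]
  have h := (integrable_rpow_mul_exp_neg_mul_sq (by norm_num : (0:ℝ) < 1/2)
    (by norm_num : (-1:ℝ) < 2)).const_mul ((Real.sqrt (2 * π))⁻¹)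
  refine h.congr (Filter.Eventually.of_forall fun x => ?_)
  simp only [hutch_pdf_eq, show ((2:ℝ)) = ((2:ℕ):ℝ) by norm_num, Real.rpow_natCast]
  ring

lemma hutch_m1 : ∫ x, x ∂(gaussianReal 0 1) = 0 := by
  rw [hutch_transfer]
  have hodd : ∀ x : ℝ, gaussianPDFReal 0 1 (-x) * (-x) = -(gaussianPDFReal 0 1 x * x) := by
    intro x
    rw [hutch_pdf_eq, hutch_pdf_eq, neg_sq]
    ring
  have h := MeasureTheory.integral_neg_eq_self (fun x => gaussianPDFReal 0 1 x * x)
    (MeasureTheory.volume : Measure ℝ)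
  simp only [hodd, integral_neg] at h
  linarith

lemma hutch_m2 : ∫ x, x ^ 2 ∂(gaussianReal 0 1) = 1 := by
  rw [hutch_transfer]
  have heq : ∀ x : ℝ, gaussianPDFReal 0 1 x * x ^ 2
      = (Real.sqrt (2 * π))⁻¹ * (|x| ^ (2:ℝ) * rexp (-(1/2) * |x| ^ (2:ℝ))) := by
    intro x
    simp only [hutch_pdf_eq, show ((2:ℝ)) = ((2:ℕ):ℝ) by norm_num, Real.rpow_natCast, sq_abs]
    ring
  simp_rw [heq]
  rw [MeasureTheory.integral_const_mul, integral_comp_abs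
    (f := fun x => x ^ (2:ℝ) * rexp (-(1/2) * x ^ (2:ℝ))),
    integral_rpow_mul_exp_neg_mul_rpow (by norm_num) (by norm_num : (-1:ℝ) < 2) (by norm_num)]
  rw [show (-((2:ℝ)+1)/2 : ℝ) = -(3/2 : ℝ) by norm_num, show (((2:ℝ)+1)/2 : ℝ) = 1/2 + 1 by norm_num,
    Real.Gamma_add_one (by norm_num), Real.Gamma_one_half_eq]
  rw [show ((3:ℝ)/2) = 1 + 1/2 by norm_num, Real.rpow_neg (by norm_num), Real.rpow_add (by norm_num),
    Real.rpow_one, ← Real.sqrt_eq_rpow, Real.sqrt_mul (by norm_num) π]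
  have h2 : Real.sqrt (1/2) = (Real.sqrt 2)⁻¹ := by
    rw [show (1/2 : ℝ) = 2⁻¹ by norm_num, Real.sqrt_inv]
  rw [h2]
  have hs2 : Real.sqrt 2 > 0 := by positivity
  have hsp : Real.sqrt π > 0 := Real.sqrt_pos.mpr pi_pos
  have hmul : Real.sqrt 2 * Real.sqrt 2 = 2 := Real.mul_self_sqrt (by norm_num)
  field_simp


lemma hutch_key (n : ℕ) (j k : Fin n) :
    Integrable (fun v : Fin n → ℝ => v j * v k) (Measure.pi fun _ => gaussianReal 0 1) ∧
    ∫ v : Fin n → ℝ, v j * v k ∂(Measure.pi fun _ => gaussianReal 0 1)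
      = if j = k then 1 else 0 := by
  letI : MeasureSpace ℝ := ⟨gaussianReal 0 1⟩
  haveI hSF : SigmaFinite (volume : Measure ℝ) :=
    inferInstanceAs (SigmaFinite (gaussianReal 0 1))
  haveI hPM : IsProbabilityMeasure (volume : Measure ℝ) :=
    inferInstanceAs (IsProbabilityMeasure (gaussianReal 0 1))
  set g : Fin n → ℝ → ℝ :=
    fun l x => (if l = j then x else 1) * (if l = k then x else 1) with hg
  have hprod : ∀ v : Fin n → ℝ, v j * v k = ∏ l, g l (v l) := by
    intro v
    rw [hg, Finset.prod_mul_distrib]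
    simp
  have hcase : ∀ l, (l = j ∧ l = k ∧ g l = fun x : ℝ => x ^ 2)
      ∨ (l = j ∧ l ≠ k ∧ g l = fun x : ℝ => x)
      ∨ (l ≠ j ∧ l = k ∧ g l = fun x : ℝ => x)
      ∨ (l ≠ j ∧ l ≠ k ∧ g l = fun _ : ℝ => 1) := by
    intro l
    by_cases hlj : l = j <;> by_cases hlk : l = k
    · exact Or.inl ⟨hlj, hlk, by funext x; rw [hg]; simp only [if_pos hlj, if_pos hlk]; ring⟩
    · exact Or.inr (Or.inl ⟨hlj, hlk, by
        funext x; rw [hg]; simp only [if_pos hlj, if_neg hlk]; ring⟩)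
    · exact Or.inr (Or.inr (Or.inl ⟨hlj, hlk, by
        funext x; rw [hg]; simp only [if_neg hlj, if_pos hlk]; ring⟩))
    · exact Or.inr (Or.inr (Or.inr ⟨hlj, hlk, by
        funext x; rw [hg]; simp only [if_neg hlj, if_neg hlk]; ring⟩))
  have hint : ∀ l, Integrable (g l) (volume : Measure ℝ) := by
    intro l
    rcases hcase l with ⟨_, _, h⟩ | ⟨_, _, h⟩ | ⟨_, _, h⟩ | ⟨_, _, h⟩ <;> rw [h]
    · exact hutch_int2
    · exact hutch_int1
    · exact hutch_int1
    · exact integrable_const 1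
  have hintval : ∀ l, (∫ x, g l x : ℝ) =
      if l = j then (if l = k then 1 else 0) else if l = k then 0 else 1 := by
    intro l
    rcases hcase l with ⟨h1, h2, h⟩ | ⟨h1, h2, h⟩ | ⟨h1, h2, h⟩ | ⟨h1, h2, h⟩
    · rw [if_pos h1, if_pos h2]; simp only [h]; exact hutch_m2
    · rw [if_pos h1, if_neg h2]; simp only [h]; exact hutch_m1
    · rw [if_neg h1, if_pos h2]; simp only [h]; exact hutch_m1
    · rw [if_neg h1, if_neg h2]; simp only [h]; simp
  constructor
  · exact (Integrable.fintype_prod (f := g) hint).congr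
      (Filter.Eventually.of_forall fun v => (hprod v).symm)
  · calc ∫ v : Fin n → ℝ, v j * v k ∂(Measure.pi fun _ => gaussianReal 0 1)
        = ∫ v : Fin n → ℝ, ∏ l, g l (v l) := by
          simp_rw [← hprod]; rfl
      _ = ∏ l, ∫ x, g l x := integral_fintype_prod_eq_prod g
      _ = if j = k then 1 else 0 := by
          by_cases hjk : j = k
          · subst hjk
            rw [if_pos rfl]
            apply Finset.prod_eq_one
            intro l _
            rw [hintval l]
            by_cases hlj : l = j
            · rw [if_pos hlj, if_pos hlj]
            · rw [if_neg hlj, if_neg hlj]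
          · rw [if_neg hjk]
            apply Finset.prod_eq_zero (Finset.mem_univ j)
            rw [hintval j, if_pos rfl, if_neg (fun h => hjk h)]

end
end HutchAux

/-- **Unbiasedness of the Hutchinson trace estimator.** If `v` is a standard
Gaussian vector (i.i.d. coordinates), then `𝔼 ‖M v‖² = ∑ᵢⱼ (M i j)²`, the squared
Frobenius norm of `M`, which equals `trace (M Mᵀ)`. -/
theorem hutchinson_unbiased (n m : ℕ) (M : Matrix (Fin m) (Fin n) ℝ) :
    (∫ v, (∑ i, (M.mulVec v i) ^ 2) ∂(Measure.pi fun _ : Fin n => gaussianReal 0 1))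
        = ∑ i, ∑ j, (M i j) ^ 2 ∧
      (∑ i, ∑ j, (M i j) ^ 2) = Matrix.trace (M * Mᵀ) := by
  set μ := Measure.pi fun _ : Fin n => gaussianReal 0 1 with hμ
  have hint : ∀ j k : Fin n, Integrable (fun v : Fin n → ℝ => v j * v k) μ :=
    fun j k => (hutch_key n j k).1
  have hval : ∀ j k : Fin n,
      ∫ v : Fin n → ℝ, v j * v k ∂μ = if j = k then 1 else 0 :=
    fun j k => (hutch_key n j k).2
  constructor
  · have hexp : ∀ v : Fin n → ℝ,
        (∑ i, (M.mulVec v i) ^ 2) = ∑ i, ∑ j, ∑ k, M i j * M i k * (v j * v k) := by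
      intro v
      refine Finset.sum_congr rfl fun i _ => ?_
      rw [Matrix.mulVec, dotProduct, sq, Finset.sum_mul_sum]
      exact Finset.sum_congr rfl fun j _ => Finset.sum_congr rfl fun k _ => by ring
    simp_rw [hexp]
    have h2 : ∀ (i : Fin m) (j : Fin n),
        Integrable (fun v : Fin n → ℝ => ∑ k, M i j * M i k * (v j * v k)) μ :=
      fun i j => integrable_finset_sum _ (fun k _ => (hint j k).const_mul _)
    have h1 : ∀ i : Fin m,
        Integrable (fun v : Fin n → ℝ => ∑ j, ∑ k, M i j * M i k * (v j * v k)) μ :=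
      fun i => integrable_finset_sum _ (fun j _ => h2 i j)
    rw [integral_finset_sum _ (fun i _ => h1 i)]
    refine Finset.sum_congr rfl fun i _ => ?_
    rw [integral_finset_sum _ (fun j _ => h2 i j)]
    refine Finset.sum_congr rfl fun j _ => ?_
    rw [integral_finset_sum _ (fun k _ => (hint j k).const_mul _)]
    have : ∀ k : Fin n, ∫ v : Fin n → ℝ, M i j * M i k * (v j * v k) ∂μ
        = if j = k then M i j * M i k else 0 := by
      intro k
      rw [integral_const_mul, hval j k]
      by_cases h : j = k <;> simp [h]
    simp_rw [this]
    rw [Finset.sum_ite_eq Finset.univ j (fun k => M i j * M i k)]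
    simp [sq]
  · simp [Matrix.trace, Matrix.diag, Matrix.mul_apply, sq]
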